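/- Under the strictly convex quadratic assumption, the set Ĝ = {(x, α) ∈ ℝ^n × Δ^m : (∑_j α_j Q_j) x = ∑_j α_j Q_j x_j^f} is compact. -/

import Mathlib

open Matrix Finset

lemma mulVec_sum_smul {n m : ℕ} (x : Fin n → ℝ) (Q : Fin m → Matrix (Fin n) (Fin n) ℝ)
    (α : Fin m → ℝ) : (∑ j, α j • Q j) *ᵥ x = ∑ j, α j • (Q j *ᵥ x) := by
  ext i
  simp only [Matrix.mulVec, dotProduct, Finset.sum_apply, Matrix.sum_apply,
    Matrix.smul_apply, Pi.smul_apply, smul_eq_mul, Finset.sum_mul, Finset.mul_sum, mul_assoc]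
  rw [Finset.sum_comm]

lemma dot_sum' {n m : ℕ} (v : Fin n → ℝ) (w : Fin m → Fin n → ℝ) :
    v ⬝ᵥ (∑ j, w j) = ∑ j, v ⬝ᵥ w j := by
  simp only [dotProduct, Finset.sum_apply, Finset.mul_sum]
  rw [Finset.sum_comm]

lemma posdef_convex_sum {n m : ℕ} (Q : Fin m → Matrix (Fin n) (Fin n) ℝ)
    (hQ : ∀ j, (Q j).PosDef) {α : Fin m → ℝ} (hα : α ∈ stdSimplex ℝ (Fin m)) :
    (∑ j, α j • Q j).PosDef := by
  obtain ⟨hnn, hsum⟩ := hα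
  rw [posDef_iff_dotProduct_mulVec]
  constructor
  · unfold Matrix.IsHermitian
    rw [conjTranspose_sum]
    exact Finset.sum_congr rfl fun j _ => by
      rw [conjTranspose_smul, (hQ j).isHermitian]; simp
  · intro x hx
    have hdot : x ⬝ᵥ ((∑ j, α j • Q j) *ᵥ x) = ∑ j, α j * (x ⬝ᵥ (Q j *ᵥ x)) := by
      rw [mulVec_sum_smul, dot_sum']
      exact Finset.sum_congr rfl fun j _ => by rw [dotProduct_smul]; rfl
    simp only [star_trivial, RCLike.re_to_real]
    rw [hdot]
    have hex : ∃ j ∈ Finset.univ, 0 < α j := by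
      by_contra h
      push_neg at h
      have : ∑ j, α j = 0 :=
        Finset.sum_eq_zero fun j _ => le_antisymm (h j (Finset.mem_univ j)) (hnn j)
      rw [hsum] at this; norm_num at this
    obtain ⟨j0, _, hj0⟩ := hex
    have hterm : ∀ j, 0 < x ⬝ᵥ (Q j) *ᵥ x := fun j => by
      have := (hQ j).dotProduct_mulVec_pos hx
      simpa using this
    exact Finset.sum_pos' (fun j _ => mul_nonneg (hnn j) (hterm j).le)
      ⟨j0, Finset.mem_univ j0, mul_pos hj0 (hterm j0)⟩

theorem Ghat_compact (n m : ℕ) (Q : Fin m → Matrix (Fin n) (Fin n) ℝ)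
    (hQ : ∀ j, (Q j).PosDef) (xf : Fin m → Fin n → ℝ) :
    IsCompact {p : (Fin n → ℝ) × (Fin m → ℝ) |
      p.2 ∈ stdSimplex ℝ (Fin m) ∧
      (∑ j, p.2 j • Q j).mulVec p.1 = ∑ j, p.2 j • (Q j).mulVec (xf j)} := by
  set A : (Fin m → ℝ) → Matrix (Fin n) (Fin n) ℝ := fun α => ∑ j, α j • Q j with hA
  set b : (Fin m → ℝ) → (Fin n → ℝ) := fun α => ∑ j, α j • (Q j) *ᵥ (xf j) with hb
  set f : (Fin m → ℝ) → (Fin n → ℝ) × (Fin m → ℝ) := fun α => ((A α)⁻¹ *ᵥ b α, α) with hf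
  have hcA : Continuous A := continuous_finset_sum _ fun j _ =>
    (continuous_apply j).smul continuous_const
  have hcb : Continuous b := continuous_finset_sum _ fun j _ =>
    (continuous_apply j).smul continuous_const
  have hdet : ∀ α ∈ stdSimplex ℝ (Fin m), (A α).det ≠ 0 := fun α hα =>
    (posdef_convex_sum Q hQ hα).det_pos.ne'
  have hcont : ContinuousOn f (stdSimplex ℝ (Fin m)) := by
    refine ContinuousOn.prodMk ?_ continuousOn_id
    have h1 : ContinuousOn (fun α => (A α).det⁻¹ • ((A α).adjugate *ᵥ b α))
        (stdSimplex ℝ (Fin m)) := by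
      refine ContinuousOn.smul (hcA.matrix_det.continuousOn.inv₀ hdet) ?_
      exact (hcA.matrix_adjugate.matrix_mulVec hcb).continuousOn
    refine h1.congr fun α hα => ?_
    rw [Matrix.inv_def, Ring.inverse_eq_inv', Matrix.smul_mulVec]
  have himg : {p : (Fin n → ℝ) × (Fin m → ℝ) |
      p.2 ∈ stdSimplex ℝ (Fin m) ∧
      (∑ j, p.2 j • Q j).mulVec p.1 = ∑ j, p.2 j • (Q j).mulVec (xf j)} =
      f '' stdSimplex ℝ (Fin m) := by
    ext ⟨x, α⟩
    simp only [Set.mem_setOf_eq, Set.mem_image, hf]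
    constructor
    · rintro ⟨hα, heq⟩
      refine ⟨α, hα, ?_⟩
      have hu := (posdef_convex_sum Q hQ hα).isUnit
      have hud : IsUnit (A α).det := (Matrix.isUnit_iff_isUnit_det _).mp hu
      have h2 : (A α)⁻¹ *ᵥ (A α *ᵥ x) = (A α)⁻¹ *ᵥ b α := by
        show (A α)⁻¹ *ᵥ ((A α).mulVec x) = _
        rw [heq]
      rw [Matrix.mulVec_mulVec, Matrix.nonsing_inv_mul _ hud, Matrix.one_mulVec] at h2
      simp [h2]
    · rintro ⟨β, hβ, heq⟩
      obtain ⟨h1, h2⟩ := Prod.ext_iff.mp heq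
      simp only at h1 h2
      subst h2
      refine ⟨hβ, ?_⟩
      have hu := (posdef_convex_sum Q hQ hβ).isUnit
      have hud : IsUnit (A β).det := (Matrix.isUnit_iff_isUnit_det _).mp hu
      show (A β) *ᵥ x = b β
      rw [← h1, Matrix.mulVec_mulVec, Matrix.mul_nonsing_inv _ hud, Matrix.one_mulVec]
  rw [himg]
  exact (isCompact_stdSimplex ℝ (Fin m)).image_of_continuousOn hcont
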